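/- Let S ⊆ N^d be semilinear with S infinite. Then S contains an infinite linear subset; equivalently, there exist b ∈ S and a nonzero p ∈ N^d such that b + n·p ∈ S for all n ∈ N. Consequently, the set {(i,j) ∈ N² : j = i²} is not semilinear. -/

import Mathlib

/-- A linear subset of ℕ^d: a base point plus all ℕ-combinations of finitely
many period vectors. -/
def IsLinear {d : ℕ} (S : Set (Fin d → ℕ)) : Prop :=
  ∃ (b : Fin d → ℕ) (P : Finset (Fin d → ℕ)),
    S = (fun m => b + m) '' (AddSubmonoid.closure (P : Set (Fin d → ℕ)) : Set (Fin d → ℕ))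

/-- A semilinear subset of ℕ^d: a finite union of linear sets. -/
def IsSemilinear {d : ℕ} (S : Set (Fin d → ℕ)) : Prop :=
  ∃ (n : ℕ) (L : Fin n → Set (Fin d → ℕ)), (∀ i, IsLinear (L i)) ∧ S = ⋃ i, L i

lemma pumping : ∀ (d : ℕ) (S : Set (Fin d → ℕ)), IsSemilinear S → S.Infinite →
    ∃ b ∈ S, ∃ p : Fin d → ℕ, p ≠ 0 ∧ ∀ n : ℕ, b + n • p ∈ S := by
  intro d S hS hInf
  obtain ⟨n, L, hL, rfl⟩ := hS
  have : ∃ i, (L i).Infinite := by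
    by_contra h
    push_neg at h
    exact hInf (Set.finite_iUnion h)
  obtain ⟨i, hi⟩ := this
  obtain ⟨b, P, hLP⟩ := hL i
  have hclInf : (AddSubmonoid.closure (P : Set (Fin d → ℕ)) : Set (Fin d → ℕ)).Infinite := by
    rw [hLP] at hi
    exact Set.Infinite.of_image _ hi
  have hp : ∃ p ∈ P, p ≠ 0 := by
    by_contra h
    push_neg at h
    have hPsub : (P : Set (Fin d → ℕ)) ⊆ {0} := fun x hx => h x hx
    have hle : AddSubmonoid.closure (P : Set (Fin d → ℕ)) ≤ ⊥ :=
      AddSubmonoid.closure_le.2 (fun x hx => by simpa using h x hx)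
    refine hclInf (Set.Finite.subset (Set.finite_singleton 0) ?_)
    intro x hx
    exact hle hx
  obtain ⟨p, hpP, hpne⟩ := hp
  have hpcl : p ∈ AddSubmonoid.closure (P : Set (Fin d → ℕ)) := AddSubmonoid.subset_closure hpP
  refine ⟨b, ?_, p, hpne, fun m => ?_⟩
  · refine Set.mem_iUnion.2 ⟨i, ?_⟩
    rw [hLP]
    exact ⟨0, (AddSubmonoid.closure _).zero_mem, by simp⟩
  · refine Set.mem_iUnion.2 ⟨i, ?_⟩
    rw [hLP]
    exact ⟨m • p, AddSubmonoid.nsmul_mem _ hpcl m, rfl⟩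

/-- Every infinite semilinear subset of ℕ^d contains an infinite linear subset
(an arithmetic ray b + n·p with p ≠ 0); consequently the parabola
{(i,j) : j = i²} is not semilinear. -/
theorem semilinear_pumping_and_parabola :
    (∀ (d : ℕ) (S : Set (Fin d → ℕ)), IsSemilinear S → S.Infinite →
      ∃ b ∈ S, ∃ p : Fin d → ℕ, p ≠ 0 ∧ ∀ n : ℕ, b + n • p ∈ S) ∧
    ¬ IsSemilinear {v : Fin 2 → ℕ | v 1 = (v 0) ^ 2} := by
  refine ⟨pumping, ?_⟩
  intro hS
  have hInf : ({v : Fin 2 → ℕ | v 1 = (v 0) ^ 2}).Infinite := by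
    apply Set.infinite_of_injective_forall_mem (f := fun i : ℕ => ![i, i ^ 2])
    · intro a b hab
      simpa using congrFun hab 0
    · intro i
      simp [Set.mem_setOf_eq]
  obtain ⟨b, hb, p, hpne, hall⟩ := pumping 2 _ hS hInf
  have key : ∀ n : ℕ, b 1 + n * p 1 = (b 0 + n * p 0) ^ 2 := by
    intro n
    have := hall n
    simpa [Pi.add_apply, Pi.smul_apply, smul_eq_mul] using this
  by_cases h0 : p 0 = 0
  · have h1 : p 1 = 0 := by
      have k0 := key 0
      have k1 := key 1
      simp [h0] at k0 k1
      omega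
    apply hpne
    funext i
    fin_cases i
    · exact h0
    · exact h1
  · have h0' : 1 ≤ p 0 := Nat.one_le_iff_ne_zero.2 h0
    set n := b 1 + p 1 + 1 with hn
    have k := key n
    have hnle : n ≤ b 0 + n * p 0 := le_trans (Nat.le_mul_of_pos_right n h0') (Nat.le_add_left _ _)
    have e1 : n * n ≤ (b 0 + n * p 0) ^ 2 := by nlinarith [hnle]
    have e2 : n * n = n * b 1 + n * p 1 + n := by rw [hn]; ring
    have e3 : b 1 + 1 ≤ n := by omega
    linarith [k, e1, e2, e3, Nat.zero_le (n * b 1)]
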